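/- If, in a PDR-style frame sequence F₀,…,Fₙ over a phase structure satisfying the frame conditions (frame 0 equals Init at ι and ∅ elsewhere, frame monotonicity, relative inductiveness between consecutive frames, and per-frame edge covering), some frame Fᵢ is a fixpoint in the sense that Fᵢ₊₁ q v ⊆ Fᵢ q v for all q, v (with i < n), then the phase automaton (Q, ι, δ, Fᵢ) is inductive with respect to TS. -/
import Mathlib

/-- If a frame in a PDR-style frame sequence is a fixpoint, it yields an
    inductive phase automaton. -/
theorem frame_fixpoint_is_inductive
    {S V Q : Type*}
    (Init : Set S) (TR : Set (S × S)) (ι : Q)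
    (δ : Q → Q → V → Set (S × S))
    (n : ℕ) (F : ℕ → Q → V → Set S)
    (hF0ι : ∀ v, F 0 ι v = Init)
    (hF0 : ∀ q v, q ≠ ι → F 0 q v = ∅)
    (hmono : ∀ j < n, ∀ q v, F j q v ⊆ F (j + 1) q v)
    (hrelind : ∀ j < n, ∀ q p v σ σ',
      σ ∈ F j q v → (σ, σ') ∈ δ q p v → σ' ∈ F (j + 1) p v)
    (hcov : ∀ j ≤ n, ∀ q v σ σ',
      σ ∈ F j q v → (σ, σ') ∈ TR → ∃ p, (σ, σ') ∈ δ q p v)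
    (i : ℕ) (hi : i < n)
    (hfix : ∀ q v, F (i + 1) q v ⊆ F i q v) :
    (∀ v, Init ⊆ F i ι v) ∧
    (∀ q p v σ σ', σ ∈ F i q v → (σ, σ') ∈ δ q p v → σ' ∈ F i p v) ∧
    (∀ q v σ σ', σ ∈ F i q v → (σ, σ') ∈ TR → ∃ p, (σ, σ') ∈ δ q p v) := by
  have hup : ∀ k, k ≤ n → ∀ v, F 0 ι v ⊆ F k ι v := by
    intro k
    induction k with
    | zero => intro _ _; exact subset_rfl
    | succ m ih =>
      intro hm v
      exact (ih (le_of_lt hm) v).trans (hmono m hm ι v)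
  refine ⟨?_, ?_, ?_⟩
  · intro v
    rw [← hF0ι v]
    exact hup i (le_of_lt hi) v
  · intro q p v σ σ' hσ hδ
    exact hfix p v (hrelind i hi q p v σ σ' hσ hδ)
  · exact hcov i (le_of_lt hi)
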